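/- arXiv:1002.0606 — 3 statements merged into one kernel-verified Lean document; each statement's English description precedes it below -/
import Mathlib

section
/- Let θ₀, θ_R, θ₀', θ_R', δ₀, δ_R, δ₀', δ_R' ∈ S_{2π} with δ₀' − δ₀ ≠ 0 mod π and δ_R' − δ_R ≠ 0 mod π, and let z ∈ ℂ \ (σ(H_{θ₀,θ_R}) ∪ σ(H_{δ₀,δ_R})). Then the linear fractional transformation Λ_{θ₀,θ_R}^{θ₀',θ_R'}(z) = (S_{δ₀'−δ₀, δ_R'−δ_R})⁻¹ · [S_{δ₀'−θ₀', δ_R'−θ_R'} + S_{θ₀'−δ₀, θ_R'−δ_R}·Λ_{δ₀,δ_R}^{δ₀',δ_R'}(z)] · [S_{δ₀'−θ₀, δ_R'−θ_R} + S_{θ₀−δ₀, θ_R−δ_R}·Λ_{δ₀,δ_R}^{δ₀',δ_R'}(z)]⁻¹ · S_{δ₀'−δ₀, δ_R'−δ_R} holds (in particular, the inverted matrix is invertible). -/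
open MeasureTheory Set Complex Filter Matrix
open scoped Classical

noncomputable section

/-- The strip `S_{2π} = {z ∈ ℂ | 0 ≤ Re z < 2π}`. -/
def S2pi : Set ℂ := {z : ℂ | 0 ≤ z.re ∧ z.re < 2 * Real.pi}

/-- `u` (with derivative `u'`) solves the inhomogeneous Schrödinger equation
`-u'' + V u - z u = f` on `[0,R]`: `u` is differentiable with derivative `u'`
on `[0,R]`, and `u'` is absolutely continuous with `u'' = (V - z) u - f` (a.e.),
encoded in integrated form. -/
def IsSolInhom (R : ℝ) (V : ℝ → ℂ) (z : ℂ) (f u u' : ℝ → ℂ) : Prop :=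
  (∀ x ∈ Icc (0:ℝ) R, HasDerivAt u (u' x) x) ∧
  (∀ x ∈ Icc (0:ℝ) R, u' x = u' 0 + ∫ t in (0:ℝ)..x, ((V t - z) * u t - f t))

/-- `u` (with derivative `u'`) solves the homogeneous equation `-u'' + V u = z u`
on `[0,R]`. -/
def IsSol (R : ℝ) (V : ℝ → ℂ) (z : ℂ) (u u' : ℝ → ℂ) : Prop :=
  IsSolInhom R V z 0 u u'

/-- The boundary trace map `γ_{θ₀,θ_R}(u) ∈ ℂ²`. -/
def bTrace (R : ℝ) (θ0 θR : ℂ) (u u' : ℝ → ℂ) : Fin 2 → ℂ :=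
  ![Complex.cos θ0 * u 0 + Complex.sin θ0 * u' 0,
    Complex.cos θR * u R - Complex.sin θR * u' R]

/-- `z` is an eigenvalue of the Schrödinger operator `H_{θ₀,θ_R}` in `L²((0,R))`.
Since `H_{θ₀,θ_R}` has purely discrete spectrum, the spectrum `σ(H_{θ₀,θ_R})`
coincides with the set of its eigenvalues. -/
def IsEigenvalue (R : ℝ) (V : ℝ → ℂ) (θ0 θR z : ℂ) : Prop :=
  ∃ u u' : ℝ → ℂ, IsSol R V z u u' ∧ bTrace R θ0 θR u u' = 0 ∧
    ∃ x ∈ Icc (0:ℝ) R, u x ≠ 0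

/-- The boundary data map `Λ_{θ₀,θ_R}^{θ₀',θ_R'}(z) : ℂ² → ℂ²`: it sends the
`(θ₀,θ_R)`-boundary data of a solution of `-u'' + V u = z u` to its
`(θ₀',θ_R')`-boundary data.  (It is defined via a choice of solution; for
`z ∉ σ(H_{θ₀,θ_R})` the solution exists and is unique, so the map is well
defined there.) -/
def lambdaMap (R : ℝ) (V : ℝ → ℂ) (θ0 θR θ0' θR' z : ℂ) (c : Fin 2 → ℂ) :
    Fin 2 → ℂ :=
  if h : ∃ u : (ℝ → ℂ) × (ℝ → ℂ), IsSol R V z u.1 u.2 ∧ bTrace R θ0 θR u.1 u.2 = c then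
    bTrace R θ0' θR' h.choose.1 h.choose.2
  else 0

/-- The boundary data map `Λ_{θ₀,θ_R}^{θ₀',θ_R'}(z)` as a `2 × 2` complex matrix. -/
def lambdaMat (R : ℝ) (V : ℝ → ℂ) (θ0 θR θ0' θR' z : ℂ) :
    Matrix (Fin 2) (Fin 2) ℂ :=
  Matrix.of fun i j => lambdaMap R V θ0 θR θ0' θR' z (Pi.single j 1) i

/-- The diagonal matrix `S_{α,β} = diag(sin α, sin β)`. -/
def Smat (α β : ℂ) : Matrix (Fin 2) (Fin 2) ℂ :=
  Matrix.diagonal ![Complex.sin α, Complex.sin β]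

end

/-- `w ≠ 0 mod π`, i.e. `w` is not an integer multiple of `π`. -/
def NeZeroModPi (w : ℂ) : Prop := ∀ k : ℤ, w ≠ (k : ℂ) * (Real.pi : ℂ)

noncomputable section AuxODE

open intervalIntegral

private lemma local_sol {W : ℝ → ℂ} (hW : Integrable W) {a b c : ℝ} (hac : a ≤ c) (hcb : c ≤ b)
    (hlen : b - a ≤ 2⁻¹) (hsmall : ∫ t in a..b, ‖W t‖ ≤ 2⁻¹) (α β : ℂ) :
    ∃ u u' : ℝ → ℂ, Continuous u ∧ Continuous u' ∧
      ∀ x ∈ Icc a b, (u x = α + ∫ t in c..x, u' t) ∧ (u' x = β + ∫ t in c..x, W t * u t) := by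
  have hab : a ≤ b := hac.trans hcb
  set cl : ℝ → ℝ := fun x => max a (min x b) with hcl
  have hclc : Continuous cl := continuous_const.max (continuous_id.min continuous_const)
  have hclm : ∀ x, cl x ∈ Icc a b :=
    fun x => ⟨le_max_left _ _, max_le hab (min_le_right _ _)⟩
  have hcle : ∀ x ∈ Icc a b, cl x = x := fun x hx => by
    simp only [hcl]; rw [min_eq_left hx.2, max_eq_right hx.1]
  have hdistcl : ∀ x, |cl x - c| ≤ 2⁻¹ := by
    intro x
    have h1 := (hclm x).1; have h2 := (hclm x).2
    rw [abs_le]; constructor <;> linarith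
  set X := BoundedContinuousFunction ℝ ℂ with hX
  have mk : ∀ (γ : ℂ) (f : ℝ → ℂ), (∀ s t : ℝ, IntervalIntegrable f volume s t) →
      ∃ g : X, ∀ x, g x = γ + ∫ t in c..cl x, f t := by
    intro γ f hf
    have hF : Continuous (fun y => ∫ t in c..y, f t) :=
      intervalIntegral.continuous_primitive (fun s t => hf s t) c
    have hcont : Continuous fun x => γ + ∫ t in c..cl x, f t :=
      continuous_const.add (hF.comp hclc)
    obtain ⟨C, hC⟩ := (isCompact_Icc (a := a) (b := b)).exists_bound_of_continuousOn
      hF.continuousOn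
    refine ⟨BoundedContinuousFunction.ofNormedAddCommGroup _ hcont (‖γ‖ + C) fun x => ?_, fun x => rfl⟩
    exact (norm_add_le _ _).trans (add_le_add le_rfl (hC _ (hclm x)))
  set T : X × X → X × X := fun p =>
    ((mk α p.2 (fun s t => p.2.continuous.intervalIntegrable s t)).choose,
     (mk β (fun r => W r * p.1 r)
        (fun s t => hW.intervalIntegrable.mul_continuousOn p.1.continuous.continuousOn)).choose)
    with hT
  have hT1 : ∀ (p : X × X) (x : ℝ), (T p).1 x = α + ∫ t in c..cl x, p.2 t :=
    fun p x => (mk α p.2 (fun s t => p.2.continuous.intervalIntegrable s t)).choose_spec x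
  have hT2 : ∀ (p : X × X) (x : ℝ), (T p).2 x = β + ∫ t in c..cl x, W t * p.1 t :=
    fun p x => (mk β (fun r => W r * p.1 r)
        (fun s t => hW.intervalIntegrable.mul_continuousOn p.1.continuous.continuousOn)).choose_spec x
  have hK : ((2⁻¹ : NNReal) : ℝ) = 2⁻¹ := by norm_num
  have key : ContractingWith 2⁻¹ T := by
    constructor
    · rw [← NNReal.coe_lt_coe, hK]; norm_num
    · apply LipschitzWith.of_dist_le_mul
      intro p q
      rw [Prod.dist_eq, hK]
      apply max_le
      · refine (BoundedContinuousFunction.dist_le (by positivity)).2 fun x => ?_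
        rw [dist_eq_norm, hT1, hT1, add_sub_add_left_eq_sub,
          ← intervalIntegral.integral_sub (p.2.continuous.intervalIntegrable c (cl x))
            (q.2.continuous.intervalIntegrable c (cl x))]
        calc ‖∫ t in c..cl x, (p.2 t - q.2 t)‖
            ≤ dist p.2 q.2 * |cl x - c| := by
              apply intervalIntegral.norm_integral_le_of_norm_le_const
              intro t _
              rw [← dist_eq_norm]
              exact BoundedContinuousFunction.dist_coe_le_dist t
          _ ≤ (2⁻¹ : ℝ) * dist p q := by
              rw [mul_comm]
              have h1 : dist p.2 q.2 ≤ dist p q := by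
                rw [Prod.dist_eq]; exact le_max_right _ _
              exact mul_le_mul (hdistcl x) h1 dist_nonneg (by norm_num)
      · refine (BoundedContinuousFunction.dist_le (by positivity)).2 fun x => ?_
        have hii : IntervalIntegrable (fun r => W r * p.1 r) volume c (cl x) :=
          hW.intervalIntegrable.mul_continuousOn p.1.continuous.continuousOn
        have hii' : IntervalIntegrable (fun r => W r * q.1 r) volume c (cl x) :=
          hW.intervalIntegrable.mul_continuousOn q.1.continuous.continuousOn
        rw [dist_eq_norm, hT2, hT2, add_sub_add_left_eq_sub,
          ← intervalIntegral.integral_sub hii hii']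
        have hsub : uIoc c (cl x) ⊆ Ioc a b := by
          rw [uIoc]
          exact Ioc_subset_Ioc (le_inf hac (hclm x).1) (sup_le hcb (hclm x).2)
        calc ‖∫ t in c..cl x, (W t * p.1 t - W t * q.1 t)‖
            ≤ ∫ t in uIoc c (cl x), ‖W t * p.1 t - W t * q.1 t‖ :=
              intervalIntegral.norm_integral_le_integral_norm_uIoc
          _ ≤ ∫ t in uIoc c (cl x), ‖W t‖ * dist p q := by
              apply setIntegral_mono_on
              · exact intervalIntegrable_iff.mp (hii.sub hii').norm
              · exact (hW.norm.mul_const _).integrableOn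
              · exact measurableSet_uIoc
              · intro t _
                rw [← mul_sub, norm_mul]
                refine mul_le_mul_of_nonneg_left ?_ (norm_nonneg _)
                rw [← dist_eq_norm]
                exact (BoundedContinuousFunction.dist_coe_le_dist t).trans
                  (by rw [Prod.dist_eq]; exact le_max_left _ _)
          _ ≤ (2⁻¹ : ℝ) * dist p q := by
              rw [MeasureTheory.integral_mul_const]
              refine mul_le_mul_of_nonneg_right ?_ (dist_nonneg (x := p) (y := q))
              calc ∫ t in uIoc c (cl x), ‖W t‖
                  ≤ ∫ t in Ioc a b, ‖W t‖ :=
                    setIntegral_mono_set hW.norm.integrableOn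
                      (Filter.Eventually.of_forall fun t => norm_nonneg _)
                      (HasSubset.Subset.eventuallyLE hsub)
                _ = ∫ t in a..b, ‖W t‖ := (intervalIntegral.integral_of_le hab).symm
                _ ≤ 2⁻¹ := hsmall
  obtain ⟨p, hp⟩ : ∃ p : X × X, T p = p :=
    ⟨ContractingWith.fixedPoint T key, key.fixedPoint_isFixedPt⟩
  refine ⟨p.1, p.2, p.1.continuous, p.2.continuous, fun x hx => ⟨?_, ?_⟩⟩
  · conv_lhs => rw [← hp]
    rw [hT1, hcle x hx]
  · conv_lhs => rw [← hp]
    rw [hT2, hcle x hx]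

private def GoodOn (W : ℝ → ℂ) (a b : ℂ) (L M : ℝ) (u u' : ℝ → ℂ) : Prop :=
  Continuous u ∧ Continuous u' ∧
    ∀ x ∈ Icc L M, (u x = a + ∫ t in (0:ℝ)..x, u' t) ∧
      (u' x = b + ∫ t in (0:ℝ)..x, W t * u t)

private lemma extend_right {W : ℝ → ℂ} (hW : Integrable W) {a b : ℂ} {L q q' : ℝ}
    (hL : L ≤ 0) (h0q : 0 ≤ q) (hqq' : q ≤ q') (hlen : q' - q ≤ 2⁻¹)
    (hsmall : ∫ t in q..q', ‖W t‖ ≤ 2⁻¹) {u u' : ℝ → ℂ}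
    (h : GoodOn W a b L q u u') : ∃ v v', GoodOn W a b L q' v v' := by
  obtain ⟨hu, hu', heq⟩ := h
  obtain ⟨v₀, v₀', hv₀c, hv₀'c, hv₀⟩ :=
    local_sol hW (le_refl q) hqq' (by linarith) hsmall (u q) (u' q)
  have hbdy : v₀ q = u q := by
    have := (hv₀ q ⟨le_rfl, hqq'⟩).1; simpa using this
  have hbdy' : v₀' q = u' q := by
    have := (hv₀ q ⟨le_rfl, hqq'⟩).2; simpa using this
  set v : ℝ → ℂ := fun x => if x ≤ q then u x else v₀ x with hv
  set v' : ℝ → ℂ := fun x => if x ≤ q then u' x else v₀' x with hv'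
  have hvc : Continuous v :=
    Continuous.if_le hu hv₀c continuous_id continuous_const fun x hx => by rw [hx, hbdy]
  have hv'c : Continuous v' :=
    Continuous.if_le hu' hv₀'c continuous_id continuous_const fun x hx => by rw [hx, hbdy']
  have hvu : ∀ t, t ≤ q → v t = u t ∧ v' t = u' t := fun t ht => ⟨if_pos ht, if_pos ht⟩
  have hvv₀ : ∀ t ∈ Icc q q', v t = v₀ t ∧ v' t = v₀' t := by
    intro t ht
    by_cases h' : t ≤ q
    · have ht' : t = q := le_antisymm h' ht.1
      subst ht'
      constructor
      · show (if t ≤ t then u t else v₀ t) = v₀ t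
        rw [if_pos le_rfl, hbdy]
      · show (if t ≤ t then u' t else v₀' t) = v₀' t
        rw [if_pos le_rfl, hbdy']
    · exact ⟨if_neg h', if_neg h'⟩
  refine ⟨v, v', hvc, hv'c, fun x hx => ?_⟩
  by_cases hxq : x ≤ q
  · have hx' : x ∈ Icc L q := ⟨hx.1, hxq⟩
    have h1 : ∫ t in (0:ℝ)..x, v' t = ∫ t in (0:ℝ)..x, u' t := by
      refine intervalIntegral.integral_congr fun t ht => ?_
      exact (hvu t (ht.2.trans (sup_le h0q hxq))).2
    have h2 : ∫ t in (0:ℝ)..x, W t * v t = ∫ t in (0:ℝ)..x, W t * u t := by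
      refine intervalIntegral.integral_congr fun t ht => ?_
      rw [(hvu t (ht.2.trans (sup_le h0q hxq))).1]
    exact ⟨by rw [(hvu x hxq).1, h1]; exact (heq x hx').1,
           by rw [(hvu x hxq).2, h2]; exact (heq x hx').2⟩
  · push_neg at hxq
    have hxm : x ∈ Icc q q' := ⟨hxq.le, hx.2⟩
    have huIcc : uIcc q x = Icc q x := uIcc_of_le hxq.le
    have e1 : ∫ t in q..x, v₀' t = ∫ t in q..x, v' t := by
      refine intervalIntegral.integral_congr fun t ht => ?_
      rw [huIcc] at ht
      exact ((hvv₀ t ⟨ht.1, ht.2.trans hx.2⟩).2).symm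
    have e2 : ∫ t in q..x, W t * v₀ t = ∫ t in q..x, W t * v t := by
      refine intervalIntegral.integral_congr fun t ht => ?_
      rw [huIcc] at ht
      rw [((hvv₀ t ⟨ht.1, ht.2.trans hx.2⟩).1)]
    have e3 : ∫ t in (0:ℝ)..q, u' t = ∫ t in (0:ℝ)..q, v' t := by
      refine intervalIntegral.integral_congr fun t ht => ?_
      rw [uIcc_of_le h0q] at ht
      exact ((hvu t ht.2).2).symm
    have e4 : ∫ t in (0:ℝ)..q, W t * u t = ∫ t in (0:ℝ)..q, W t * v t := by
      refine intervalIntegral.integral_congr fun t ht => ?_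
      rw [uIcc_of_le h0q] at ht
      rw [(hvu t ht.2).1]
    have hq' : q ∈ Icc L q := ⟨hL.trans h0q, le_rfl⟩
    have iiv1 : IntervalIntegrable v' volume 0 q := hv'c.intervalIntegrable 0 q
    have iiv2 : IntervalIntegrable v' volume q x := hv'c.intervalIntegrable q x
    have iiw1 : IntervalIntegrable (fun r => W r * v r) volume 0 q :=
      hW.intervalIntegrable.mul_continuousOn hvc.continuousOn
    have iiw2 : IntervalIntegrable (fun r => W r * v r) volume q x :=
      hW.intervalIntegrable.mul_continuousOn hvc.continuousOn
    constructor
    · rw [(hvv₀ x hxm).1, (hv₀ x hxm).1, (heq q hq').1, e1, e3,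
        ← intervalIntegral.integral_add_adjacent_intervals iiv1 iiv2, add_assoc]
    · rw [(hvv₀ x hxm).2, (hv₀ x hxm).2, (heq q hq').2, e2, e4,
        ← intervalIntegral.integral_add_adjacent_intervals iiw1 iiw2, add_assoc]

private lemma extend_left {W : ℝ → ℂ} (hW : Integrable W) {a b : ℂ} {M p p' : ℝ}
    (hM : 0 ≤ M) (hp0 : p ≤ 0) (hpp' : p' ≤ p) (hlen : p - p' ≤ 2⁻¹)
    (hsmall : ∫ t in p'..p, ‖W t‖ ≤ 2⁻¹) {u u' : ℝ → ℂ}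
    (h : GoodOn W a b p M u u') : ∃ v v', GoodOn W a b p' M v v' := by
  obtain ⟨hu, hu', heq⟩ := h
  obtain ⟨v₀, v₀', hv₀c, hv₀'c, hv₀⟩ :=
    local_sol hW hpp' (le_refl p) (by linarith) hsmall (u p) (u' p)
  have hbdy : v₀ p = u p := by
    have := (hv₀ p ⟨hpp', le_rfl⟩).1; simpa using this
  have hbdy' : v₀' p = u' p := by
    have := (hv₀ p ⟨hpp', le_rfl⟩).2; simpa using this
  set v : ℝ → ℂ := fun x => if p ≤ x then u x else v₀ x with hv
  set v' : ℝ → ℂ := fun x => if p ≤ x then u' x else v₀' x with hv'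
  have hvc : Continuous v :=
    Continuous.if_le hu hv₀c continuous_const continuous_id fun x hx => by rw [← hx, hbdy]
  have hv'c : Continuous v' :=
    Continuous.if_le hu' hv₀'c continuous_const continuous_id fun x hx => by rw [← hx, hbdy']
  have hvu : ∀ t, p ≤ t → v t = u t ∧ v' t = u' t := fun t ht => ⟨if_pos ht, if_pos ht⟩
  have hvv₀ : ∀ t ∈ Icc p' p, v t = v₀ t ∧ v' t = v₀' t := by
    intro t ht
    by_cases h' : p ≤ t
    · have ht' : t = p := le_antisymm ht.2 h'
      subst ht'
      constructor
      · show (if t ≤ t then u t else v₀ t) = v₀ t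
        rw [if_pos le_rfl, hbdy]
      · show (if t ≤ t then u' t else v₀' t) = v₀' t
        rw [if_pos le_rfl, hbdy']
    · exact ⟨if_neg h', if_neg h'⟩
  refine ⟨v, v', hvc, hv'c, fun x hx => ?_⟩
  by_cases hxp : p ≤ x
  · have hx' : x ∈ Icc p M := ⟨hxp, hx.2⟩
    have h1 : ∫ t in (0:ℝ)..x, v' t = ∫ t in (0:ℝ)..x, u' t := by
      refine intervalIntegral.integral_congr fun t ht => ?_
      exact (hvu t ((le_inf hp0 hxp).trans ht.1)).2
    have h2 : ∫ t in (0:ℝ)..x, W t * v t = ∫ t in (0:ℝ)..x, W t * u t := by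
      refine intervalIntegral.integral_congr fun t ht => ?_
      rw [(hvu t ((le_inf hp0 hxp).trans ht.1)).1]
    exact ⟨by rw [(hvu x hxp).1, h1]; exact (heq x hx').1,
           by rw [(hvu x hxp).2, h2]; exact (heq x hx').2⟩
  · push_neg at hxp
    have hxm : x ∈ Icc p' p := ⟨hx.1, hxp.le⟩
    have huIcc : uIcc p x = Icc x p := uIcc_of_ge hxp.le
    have e1 : ∫ t in p..x, v₀' t = ∫ t in p..x, v' t := by
      refine intervalIntegral.integral_congr fun t ht => ?_
      rw [huIcc] at ht
      exact ((hvv₀ t ⟨hx.1.trans ht.1, ht.2⟩).2).symm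
    have e2 : ∫ t in p..x, W t * v₀ t = ∫ t in p..x, W t * v t := by
      refine intervalIntegral.integral_congr fun t ht => ?_
      rw [huIcc] at ht
      rw [((hvv₀ t ⟨hx.1.trans ht.1, ht.2⟩).1)]
    have e3 : ∫ t in (0:ℝ)..p, u' t = ∫ t in (0:ℝ)..p, v' t := by
      refine intervalIntegral.integral_congr fun t ht => ?_
      rw [uIcc_of_ge hp0] at ht
      exact ((hvu t ht.1).2).symm
    have e4 : ∫ t in (0:ℝ)..p, W t * u t = ∫ t in (0:ℝ)..p, W t * v t := by
      refine intervalIntegral.integral_congr fun t ht => ?_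
      rw [uIcc_of_ge hp0] at ht
      rw [(hvu t ht.1).1]
    have hpmem : p ∈ Icc p M := ⟨le_rfl, hp0.trans hM⟩
    have iiv1 : IntervalIntegrable v' volume 0 p := hv'c.intervalIntegrable 0 p
    have iiv2 : IntervalIntegrable v' volume p x := hv'c.intervalIntegrable p x
    have iiw1 : IntervalIntegrable (fun r => W r * v r) volume 0 p :=
      hW.intervalIntegrable.mul_continuousOn hvc.continuousOn
    have iiw2 : IntervalIntegrable (fun r => W r * v r) volume p x :=
      hW.intervalIntegrable.mul_continuousOn hvc.continuousOn
    constructor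
    · rw [(hvv₀ x hxm).1, (hv₀ x hxm).1, (heq p hpmem).1, e1, e3,
        ← intervalIntegral.integral_add_adjacent_intervals iiv1 iiv2, add_assoc]
    · rw [(hvv₀ x hxm).2, (hv₀ x hxm).2, (heq p hpmem).2, e2, e4,
        ← intervalIntegral.integral_add_adjacent_intervals iiw1 iiw2, add_assoc]

private lemma global_sol {W : ℝ → ℂ} (hW : Integrable W) {L M : ℝ} (hL : L ≤ 0) (hM : 0 ≤ M)
    (a b : ℂ) : ∃ u u', GoodOn W a b L M u u' := by
  obtain ⟨δ, hδpos, hδ⟩ : ∃ δ > 0, ∀ s t : ℝ, s ∈ Icc L M → t ∈ Icc L M → |t - s| ≤ δ →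
      ∫ r in s..t, ‖W r‖ ≤ 2⁻¹ := by
    have hu : UniformContinuousOn (fun x : ℝ => ∫ t in (0:ℝ)..x, ‖W t‖) (Icc L M) :=
      (isCompact_Icc).uniformContinuousOn_of_continuous
        (intervalIntegral.continuous_primitive (fun s t => hW.norm.intervalIntegrable) 0).continuousOn
    obtain ⟨δ, hδpos, hδ⟩ := (Metric.uniformContinuousOn_iff).1 hu 4⁻¹ (by norm_num)
    refine ⟨δ / 2, by positivity, fun s t hs ht hst => ?_⟩
    have hd : dist t s < δ := by
      rw [Real.dist_eq]; linarith [abs_nonneg (t - s)]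
    have h2 := hδ t ht s hs hd
    rw [Real.dist_eq] at h2
    have h3 : (∫ r in (0:ℝ)..t, ‖W r‖) - ∫ r in (0:ℝ)..s, ‖W r‖ = ∫ r in s..t, ‖W r‖ :=
      intervalIntegral.integral_interval_sub_left hW.norm.intervalIntegrable
        hW.norm.intervalIntegrable
    calc ∫ r in s..t, ‖W r‖ ≤ |∫ r in s..t, ‖W r‖| := le_abs_self _
      _ = |(∫ r in (0:ℝ)..t, ‖W r‖) - ∫ r in (0:ℝ)..s, ‖W r‖| := by rw [h3]
      _ ≤ 2⁻¹ := by linarith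
  set h : ℝ := min δ 2⁻¹ with hh
  have hhpos : 0 < h := lt_min hδpos (by norm_num)
  have hhδ : h ≤ δ := min_le_left _ _
  have hh2 : h ≤ 2⁻¹ := min_le_right _ _
  have hmain : ∀ n : ℕ, ∃ u u', GoodOn W a b (max L (-((n : ℝ) * h))) (min M ((n : ℝ) * h)) u u' := by
    intro n
    induction n with
    | zero =>
      refine ⟨fun _ => a, fun _ => b, continuous_const, continuous_const, fun x hx => ?_⟩
      have hx0 : x = 0 := by
        simp only [Nat.cast_zero, zero_mul, neg_zero, max_eq_right hL, min_eq_right hM] at hx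
        exact le_antisymm hx.2 hx.1
      subst hx0
      simp
    | succ n ih =>
      obtain ⟨u, u', hg⟩ := ih
      set A : ℝ := (n : ℝ) * h with hA
      have hA0 : 0 ≤ A := by positivity
      have hcast : ((n + 1 : ℕ) : ℝ) * h = A + h := by push_cast; ring
      rw [hcast]
      set q : ℝ := min M A with hq
      set q' : ℝ := min M (A + h) with hq'
      set p : ℝ := max L (-A) with hp
      set p' : ℝ := max L (-(A + h)) with hp'
      have hq0 : 0 ≤ q := le_min hM hA0
      have hp0 : p ≤ 0 := max_le hL (by linarith)
      have hqq' : q ≤ q' := min_le_min le_rfl (by linarith)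
      have hp'p : p' ≤ p := max_le_max le_rfl (by linarith)
      have hqd : q' - q ≤ h := by
        rcases le_or_gt M A with hc | hc
        · rw [hq, hq', min_eq_left hc, min_eq_left (by linarith)]; linarith
        · have h1 : q' ≤ A + h := min_le_right _ _
          rw [hq, min_eq_right hc.le]; linarith
      have hpd : p - p' ≤ h := by
        rcases le_or_gt (-A) L with hc | hc
        · rw [hp, hp', max_eq_left hc, max_eq_left (by linarith)]; linarith
        · have h1 : -(A + h) ≤ p' := le_max_right _ _
          rw [hp, max_eq_right hc.le]; linarith
      have hq'0 : 0 ≤ q' := hq0.trans hqq'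
      have hqmem : q ∈ Icc L M := ⟨hL.trans hq0, min_le_left _ _⟩
      have hq'mem : q' ∈ Icc L M := ⟨hL.trans hq'0, min_le_left _ _⟩
      have hpmem : p ∈ Icc L M := ⟨le_max_left _ _, hp0.trans hM⟩
      have hp'mem : p' ∈ Icc L M := ⟨le_max_left _ _, (hp'p.trans hp0).trans hM⟩
      have hsmR : ∫ t in q..q', ‖W t‖ ≤ 2⁻¹ := by
        apply hδ _ _ hqmem hq'mem
        have : |q' - q| = q' - q := abs_of_nonneg (by linarith)
        rw [this]; linarith
      have hsmL : ∫ t in p'..p, ‖W t‖ ≤ 2⁻¹ := by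
        apply hδ _ _ hp'mem hpmem
        have : |p - p'| = p - p' := abs_of_nonneg (by linarith)
        rw [this]; linarith
      obtain ⟨v, v', hgv⟩ := extend_right hW hp0 hq0 hqq' (by linarith) hsmR hg
      obtain ⟨w, w', hgw⟩ := extend_left hW hq'0 hp0 hp'p (by linarith) hsmL hgv
      exact ⟨w, w', hgw⟩
  obtain ⟨n, hn⟩ := exists_nat_ge (max M (-L) / h)
  have hn' : max M (-L) ≤ (n : ℝ) * h := by
    rw [div_le_iff₀ hhpos] at hn
    exact hn
  obtain ⟨u, u', hg⟩ := hmain n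
  have h1 : max L (-((n : ℝ) * h)) = L := max_eq_left (by
    have : M ≤ max M (-L) := le_max_left _ _
    have h2 : -L ≤ (n : ℝ) * h := (le_max_right M (-L)).trans hn'
    linarith)
  have h2 : min M ((n : ℝ) * h) = M := min_eq_left ((le_max_left M (-L)).trans hn')
  rw [h1, h2] at hg
  exact ⟨u, u', hg⟩

private lemma exists_isSol {R : ℝ} (hR : 0 < R) {V : ℝ → ℂ} (hV : IntegrableOn V (Ioo 0 R))
    (z : ℂ) (a b : ℂ) : ∃ u u' : ℝ → ℂ, u 0 = a ∧ u' 0 = b ∧ Continuous u ∧ Continuous u' ∧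
      IsSol R V z u u' := by
  set W : ℝ → ℂ := (Ioo 0 R).indicator (fun t => V t - z) with hWdef
  have hW : Integrable W volume := by
    refine IntegrableOn.integrable_indicator ?_ measurableSet_Ioo
    exact hV.sub (integrableOn_const measure_Ioo_lt_top.ne)
  obtain ⟨u, u', hu, hu', heq⟩ := global_sol hW (by linarith : (-1:ℝ) ≤ 0)
    (by linarith : (0:ℝ) ≤ R + 1) a b
  have h0 : (0:ℝ) ∈ Icc (-1:ℝ) (R+1) := ⟨by linarith, by linarith⟩
  have hu0 : u 0 = a := by have := (heq 0 h0).1; simpa using this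
  have hu'0 : u' 0 = b := by have := (heq 0 h0).2; simpa using this
  refine ⟨u, u', hu0, hu'0, hu, hu', ?_, ?_⟩
  · intro x hx
    have hmem : Ioo (-1:ℝ) (R+1) ∈ nhds x :=
      isOpen_Ioo.mem_nhds ⟨by linarith [hx.1], by linarith [hx.2]⟩
    have hev : (fun y => a + ∫ t in (0:ℝ)..y, u' t) =ᶠ[nhds x] u := by
      filter_upwards [hmem] with y hy
      exact ((heq y ⟨hy.1.le, hy.2.le⟩).1).symm
    have hd : HasDerivAt (fun y => a + ∫ t in (0:ℝ)..y, u' t) (u' x) x := by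
      apply HasDerivAt.const_add
      exact intervalIntegral.integral_hasDerivAt_right (hu'.intervalIntegrable 0 x)
        hu'.stronglyMeasurable.stronglyMeasurableAtFilter hu'.continuousAt
    exact hd.congr_of_eventuallyEq hev.symm
  · intro x hx
    have hxm : x ∈ Icc (-1:ℝ) (R+1) := ⟨by linarith [hx.1], by linarith [hx.2]⟩
    have hne : ∀ᵐ t : ℝ, t ≠ R := by
      rw [ae_iff]
      simp only [ne_eq, not_not, setOf_eq_eq_singleton]
      exact Real.volume_singleton
    have hcongr : ∫ t in (0:ℝ)..x, W t * u t
        = ∫ t in (0:ℝ)..x, ((V t - z) * u t - (0 : ℝ → ℂ) t) := by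
      apply intervalIntegral.integral_congr_ae
      filter_upwards [hne] with t htR ht
      rw [uIoc_of_le hx.1] at ht
      have htm : t ∈ Ioo 0 R := ⟨ht.1, lt_of_le_of_ne (ht.2.trans hx.2) htR⟩
      rw [hWdef, indicator_of_mem htm]
      simp
    rw [(heq x hxm).2, hu'0, ← hcongr]

private lemma ii_V {R : ℝ} {V : ℝ → ℂ} (hV : IntegrableOn V (Ioo 0 R)) (z : ℂ)
    {w : ℝ → ℂ} {x : ℝ} (hx : x ∈ Icc (0:ℝ) R) (hw : ContinuousOn w (uIcc (0:ℝ) x)) :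
    IntervalIntegrable (fun t => (V t - z) * w t) volume 0 x := by
  have h1 : IntervalIntegrable (fun t => V t - z) volume 0 x := by
    rw [intervalIntegrable_iff_integrableOn_Ioc_of_le hx.1]
    have h0 : IntegrableOn (fun t => V t - z) (Ioo 0 R) := by
      exact hV.sub (integrableOn_const measure_Ioo_lt_top.ne)
    have h2 : IntegrableOn (fun t => V t - z) (Ioo 0 x) :=
      h0.mono_set (Ioo_subset_Ioo le_rfl hx.2)
    exact h2.congr_set_ae (MeasureTheory.Ioo_ae_eq_Ioc (a := (0:ℝ)) (b := x)).symm
  exact h1.mul_continuousOn hw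

private lemma contOn_of_isSol {R : ℝ} {V : ℝ → ℂ} {z : ℂ} {u u' : ℝ → ℂ}
    (h : IsSol R V z u u') {x : ℝ} (hx : x ∈ Icc (0:ℝ) R) :
    ContinuousOn u (uIcc (0:ℝ) x) := by
  intro t ht
  rw [uIcc_of_le hx.1] at ht
  exact ((h.1 t ⟨ht.1, ht.2.trans hx.2⟩).continuousAt).continuousWithinAt

private lemma isSol_comb {R : ℝ} (hR : 0 < R) {V : ℝ → ℂ} (hV : IntegrableOn V (Ioo 0 R))
    {z : ℂ} {u1 u1' u2 u2' : ℝ → ℂ} (h1 : IsSol R V z u1 u1') (h2 : IsSol R V z u2 u2')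
    (c1 c2 : ℂ) :
    IsSol R V z (fun x => c1 * u1 x + c2 * u2 x) (fun x => c1 * u1' x + c2 * u2' x) := by
  refine ⟨fun x hx => ((h1.1 x hx).const_mul c1).add ((h2.1 x hx).const_mul c2), fun x hx => ?_⟩
  have e1 := h1.2 x hx
  have e2 := h2.2 x hx
  simp only [Pi.zero_apply, sub_zero] at e1 e2 ⊢
  have i1 : IntervalIntegrable (fun t => (V t - z) * u1 t) volume 0 x :=
    ii_V hV z hx (contOn_of_isSol h1 hx)
  have i2 : IntervalIntegrable (fun t => (V t - z) * u2 t) volume 0 x :=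
    ii_V hV z hx (contOn_of_isSol h2 hx)
  have key : ∫ t in (0:ℝ)..x, (V t - z) * (c1 * u1 t + c2 * u2 t)
      = c1 * (∫ t in (0:ℝ)..x, (V t - z) * u1 t)
        + c2 * ∫ t in (0:ℝ)..x, (V t - z) * u2 t := by
    rw [← intervalIntegral.integral_const_mul, ← intervalIntegral.integral_const_mul,
      ← intervalIntegral.integral_add (i1.const_mul c1) (i2.const_mul c2)]
    refine intervalIntegral.integral_congr fun t _ => ?_
    ring
  rw [e1, e2, key]
  ring

private lemma sol_vanish {R : ℝ} (hR : 0 < R) {V : ℝ → ℂ} {η0 ηR z : ℂ}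
    (hz : ¬ IsEigenvalue R V η0 ηR z) {w w' : ℝ → ℂ} (hsol : IsSol R V z w w')
    (htr : bTrace R η0 ηR w w' = 0) :
    w 0 = 0 ∧ w R = 0 ∧ w' 0 = 0 ∧ w' R = 0 := by
  have hzero : ∀ x ∈ Icc (0:ℝ) R, w x = 0 := by
    by_contra hc
    push_neg at hc
    obtain ⟨x, hx, hxe⟩ := hc
    exact hz ⟨w, w', hsol, htr, x, hx, hxe⟩
  have hint : ∀ x ∈ Icc (0:ℝ) R, (∫ t in (0:ℝ)..x, ((V t - z) * w t - (0 : ℝ → ℂ) t)) = 0 := by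
    intro x hx
    have hcg : ∀ t ∈ uIcc (0:ℝ) x, ((V t - z) * w t - (0 : ℝ → ℂ) t) = (fun _ => (0:ℂ)) t := by
      intro t ht
      rw [uIcc_of_le hx.1] at ht
      rw [hzero t ⟨ht.1, ht.2.trans hx.2⟩]
      simp
    rw [intervalIntegral.integral_congr hcg, intervalIntegral.integral_zero]
  have hm : R/2 ∈ Icc (0:ℝ) R := ⟨by linarith, by linarith⟩
  have hmid : w' (R/2) = 0 := by
    have hd := hsol.1 (R/2) hm
    have hev : w =ᶠ[nhds (R/2)] (fun _ => (0:ℂ)) := by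
      filter_upwards [isOpen_Ioo.mem_nhds (⟨by linarith, by linarith⟩ : R/2 ∈ Ioo (0:ℝ) R)]
        with y hy
      exact hzero y ⟨hy.1.le, hy.2.le⟩
    have hd0 : HasDerivAt w 0 (R/2) :=
      (hasDerivAt_const (R/2) (0:ℂ)).congr_of_eventuallyEq hev
    exact hd.unique hd0
  have h2 := hsol.2 (R/2) hm
  rw [hint (R/2) hm, add_zero] at h2
  have h3 := hsol.2 R ⟨hR.le, le_rfl⟩
  rw [hint R ⟨hR.le, le_rfl⟩, add_zero] at h3
  exact ⟨hzero 0 ⟨le_rfl, hR.le⟩, hzero R ⟨hR.le, le_rfl⟩, h2 ▸ hmid, by rw [h3, ← h2, hmid]⟩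

private lemma trig_id (α β γ p q : ℂ) :
    Complex.sin (γ - β) * (Complex.cos α * p + Complex.sin α * q) +
      Complex.sin (β - α) * (Complex.cos γ * p + Complex.sin γ * q) =
    Complex.sin (γ - α) * (Complex.cos β * p + Complex.sin β * q) := by
  simp only [Complex.sin_sub]
  ring

private lemma bTrace_comb (R : ℝ) (η0 ηR : ℂ) (f f' g g' : ℝ → ℂ) (c1 c2 : ℂ) (i : Fin 2) :
    bTrace R η0 ηR (fun x => c1 * f x + c2 * g x) (fun x => c1 * f' x + c2 * g' x) i
      = c1 * bTrace R η0 ηR f f' i + c2 * bTrace R η0 ηR g g' i := by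
  fin_cases i <;> simp [bTrace] <;> ring

end AuxODE

/-- The linear fractional transformation relating two general
boundary data maps: for `δ₀' − δ₀ ≠ 0 mod π`, `δ_R' − δ_R ≠ 0 mod π` and
`z ∉ σ(H_{θ₀,θ_R}) ∪ σ(H_{δ₀,δ_R})`,
`Λ_{θ₀,θ_R}^{θ₀',θ_R'}(z) = (S_{δ₀'−δ₀,δ_R'−δ_R})⁻¹
  [S_{δ₀'−θ₀',δ_R'−θ_R'} + S_{θ₀'−δ₀,θ_R'−δ_R} Λ_{δ₀,δ_R}^{δ₀',δ_R'}(z)]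
  [S_{δ₀'−θ₀,δ_R'−θ_R} + S_{θ₀−δ₀,θ_R−δ_R} Λ_{δ₀,δ_R}^{δ₀',δ_R'}(z)]⁻¹
  S_{δ₀'−δ₀,δ_R'−δ_R}`, the inverted matrix being invertible. -/
theorem lambda_linear_fractional_transformation
    (R : ℝ) (hR : 0 < R) (V : ℝ → ℂ) (hV : IntegrableOn V (Ioo 0 R))
    (θ0 θR θ0' θR' δ0 δR δ0' δR' : ℂ)
    (hθ0 : θ0 ∈ S2pi) (hθR : θR ∈ S2pi) (hθ0' : θ0' ∈ S2pi) (hθR' : θR' ∈ S2pi)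
    (hδ0 : δ0 ∈ S2pi) (hδR : δR ∈ S2pi) (hδ0' : δ0' ∈ S2pi) (hδR' : δR' ∈ S2pi)
    (hm0 : NeZeroModPi (δ0' - δ0)) (hmR : NeZeroModPi (δR' - δR))
    (z : ℂ) (hz : ¬ IsEigenvalue R V θ0 θR z) (hz' : ¬ IsEigenvalue R V δ0 δR z) :
    IsUnit (Smat (δ0' - θ0) (δR' - θR) +
        Smat (θ0 - δ0) (θR - δR) * lambdaMat R V δ0 δR δ0' δR' z) ∧
    lambdaMat R V θ0 θR θ0' θR' z =
      (Smat (δ0' - δ0) (δR' - δR))⁻¹ *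
        (Smat (δ0' - θ0') (δR' - θR') +
          Smat (θ0' - δ0) (θR' - δR) * lambdaMat R V δ0 δR δ0' δR' z) *
        (Smat (δ0' - θ0) (δR' - θR) +
          Smat (θ0 - δ0) (θR - δR) * lambdaMat R V δ0 δR δ0' δR' z)⁻¹ *
        Smat (δ0' - δ0) (δR' - δR) := by
  classical
  obtain ⟨u1, u1', h10, h1'0, hc1, hc1', hsol1⟩ := exists_isSol hR hV z 1 0
  obtain ⟨u2, u2', h20, h2'0, hc2, hc2', hsol2⟩ := exists_isSol hR hV z 0 1
  set sol : (Fin 2 → ℂ) → (ℝ → ℂ) := fun c x => c 0 * u1 x + c 1 * u2 x with hsoldef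
  set sol' : (Fin 2 → ℂ) → (ℝ → ℂ) := fun c x => c 0 * u1' x + c 1 * u2' x with hsol'def
  have hsolc : ∀ c, IsSol R V z (sol c) (sol' c) :=
    fun c => isSol_comb hR hV hsol1 hsol2 (c 0) (c 1)
  have hsol0 : ∀ c, sol c 0 = c 0 := fun c => by
    simp only [hsoldef, h10, h20]; ring
  have hsol'0 : ∀ c, sol' c 0 = c 1 := fun c => by
    simp only [hsol'def, h1'0, h2'0]; ring
  set Mm : ℂ → ℂ → Matrix (Fin 2) (Fin 2) ℂ := fun η0 ηR =>
    Matrix.of fun i j => bTrace R η0 ηR (sol (Pi.single j 1)) (sol' (Pi.single j 1)) i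
    with hMm
  have hTr : ∀ η0 ηR c, bTrace R η0 ηR (sol c) (sol' c) = (Mm η0 ηR).mulVec c := by
    intro η0 ηR c
    funext i
    have hcomb : ∀ i : Fin 2, bTrace R η0 ηR (sol c) (sol' c) i
        = c 0 * bTrace R η0 ηR u1 u1' i + c 1 * bTrace R η0 ηR u2 u2' i :=
      fun i => bTrace_comb R η0 ηR u1 u1' u2 u2' (c 0) (c 1) i
    have hsingle : ∀ (j : Fin 2) (i : Fin 2), (Mm η0 ηR) i j
        = bTrace R η0 ηR (sol (Pi.single j 1)) (sol' (Pi.single j 1)) i := fun _ _ => rfl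
    have h0' : ∀ i, (Mm η0 ηR) i 0 = bTrace R η0 ηR u1 u1' i := by
      intro i
      rw [hsingle, bTrace_comb R η0 ηR u1 u1' u2 u2' _ _ i]
      simp
    have h1' : ∀ i, (Mm η0 ηR) i 1 = bTrace R η0 ηR u2 u2' i := by
      intro i
      rw [hsingle, bTrace_comb R η0 ηR u1 u1' u2 u2' _ _ i]
      simp
    rw [hcomb i, Matrix.mulVec, dotProduct, Fin.sum_univ_two, h0' i, h1' i]
    ring
  have hInv : ∀ η0 ηR : ℂ, ¬ IsEigenvalue R V η0 ηR z → IsUnit (Mm η0 ηR).det := by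
    intro η0 ηR hne
    rw [isUnit_iff_ne_zero]
    intro hdet
    obtain ⟨v, hv0, hv⟩ := (Matrix.exists_mulVec_eq_zero_iff).2 hdet
    have htr : bTrace R η0 ηR (sol v) (sol' v) = 0 := by rw [hTr]; exact hv
    obtain ⟨hA, hB, hC, hD⟩ := sol_vanish hR hne (hsolc v) htr
    apply hv0
    funext i
    fin_cases i
    · show v 0 = 0
      rw [← hsol0 v]; exact hA
    · show v 1 = 0
      rw [← hsol'0 v]; exact hC
  have hlam : ∀ η0 ηR η0' ηR' : ℂ, ¬ IsEigenvalue R V η0 ηR z →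
      lambdaMat R V η0 ηR η0' ηR' z = Mm η0' ηR' * (Mm η0 ηR)⁻¹ := by
    intro η0 ηR η0' ηR' hne
    have hdet := hInv η0 ηR hne
    ext i j
    set c : Fin 2 → ℂ := (Mm η0 ηR)⁻¹.mulVec (Pi.single j 1) with hc
    have hcc : (Mm η0 ηR).mulVec c = Pi.single j 1 := by
      rw [hc, Matrix.mulVec_mulVec, Matrix.mul_nonsing_inv _ hdet, Matrix.one_mulVec]
    have hex : ∃ p : (ℝ → ℂ) × (ℝ → ℂ),
        IsSol R V z p.1 p.2 ∧ bTrace R η0 ηR p.1 p.2 = Pi.single j 1 :=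
      ⟨(sol c, sol' c), hsolc c, by rw [hTr]; exact hcc⟩
    show lambdaMap R V η0 ηR η0' ηR' z (Pi.single j 1) i = _
    rw [lambdaMap, dif_pos hex]
    obtain ⟨hPsol, hPtr⟩ := hex.choose_spec
    set d : ℝ → ℂ := fun x => 1 * hex.choose.1 x + (-1) * sol c x with hd
    set d' : ℝ → ℂ := fun x => 1 * hex.choose.2 x + (-1) * sol' c x with hd'
    have hdsol : IsSol R V z d d' := isSol_comb hR hV hPsol (hsolc c) 1 (-1)
    have hdtr : bTrace R η0 ηR d d' = 0 := by
      funext i2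
      rw [hd, hd', bTrace_comb R η0 ηR _ _ _ _ 1 (-1) i2, hPtr, hTr, hcc]
      simp
    obtain ⟨e0, eR, e0', eR'⟩ := sol_vanish hR hne hdsol hdtr
    have q1 : hex.choose.1 0 = sol c 0 := by
      have h := e0; simp only [hd] at h; linear_combination h
    have q2 : hex.choose.1 R = sol c R := by
      have h := eR; simp only [hd] at h; linear_combination h
    have q3 : hex.choose.2 0 = sol' c 0 := by
      have h := e0'; simp only [hd'] at h; linear_combination h
    have q4 : hex.choose.2 R = sol' c R := by
      have h := eR'; simp only [hd'] at h; linear_combination h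
    have hfinal : bTrace R η0' ηR' hex.choose.1 hex.choose.2
        = bTrace R η0' ηR' (sol c) (sol' c) := by
      simp only [bTrace]; rw [← q1, ← q2, ← q3, ← q4]; rfl
    rw [hfinal, hTr, hc, Matrix.mulVec_mulVec, Matrix.mulVec_single]
    simp
  have hsin1 : Complex.sin (δ0' - δ0) ≠ 0 := fun h => by
    obtain ⟨k, hk⟩ := Complex.sin_eq_zero_iff.1 h
    exact hm0 k hk
  have hsin2 : Complex.sin (δR' - δR) ≠ 0 := fun h => by
    obtain ⟨k, hk⟩ := Complex.sin_eq_zero_iff.1 h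
    exact hmR k hk
  have hSdet : IsUnit (Smat (δ0' - δ0) (δR' - δR)).det := by
    rw [isUnit_iff_ne_zero, Smat, Matrix.det_diagonal, Fin.prod_univ_two]
    simp only [Matrix.cons_val_zero, Matrix.cons_val_one, Matrix.head_cons]
    exact mul_ne_zero hsin1 hsin2
  have hkey : ∀ η0 ηR : ℂ,
      Smat (δ0' - η0) (δR' - ηR) * Mm δ0 δR + Smat (η0 - δ0) (ηR - δR) * Mm δ0' δR'
        = Smat (δ0' - δ0) (δR' - δR) * Mm η0 ηR := by
    intro η0 ηR
    ext i j
    have hs0 : ∀ x, sol (Pi.single j 1) x = (Pi.single j 1 : Fin 2 → ℂ) 0 * u1 x + (Pi.single j 1 : Fin 2 → ℂ) 1 * u2 x :=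
      fun _ => rfl
    have hs1 : ∀ x, sol' (Pi.single j 1) x = (Pi.single j 1 : Fin 2 → ℂ) 0 * u1' x + (Pi.single j 1 : Fin 2 → ℂ) 1 * u2' x :=
      fun _ => rfl
    fin_cases i
    · simp only [Matrix.add_apply, Smat, Matrix.diagonal_mul, hMm, Matrix.of_apply, bTrace,
        Fin.isValue, Fin.zero_eta, Matrix.cons_val_zero, hs0, hs1]
      linear_combination trig_id δ0 η0 δ0'
        ((Pi.single j 1 : Fin 2 → ℂ) 0 * u1 0 + (Pi.single j 1 : Fin 2 → ℂ) 1 * u2 0)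
        ((Pi.single j 1 : Fin 2 → ℂ) 0 * u1' 0 + (Pi.single j 1 : Fin 2 → ℂ) 1 * u2' 0)
    · simp only [Matrix.add_apply, Smat, Matrix.diagonal_mul, hMm, Matrix.of_apply, bTrace,
        Fin.isValue, Fin.mk_one, Matrix.cons_val_one, Matrix.head_cons, Matrix.cons_val_zero, hs0, hs1]
      linear_combination trig_id δR ηR δR'
        ((Pi.single j 1 : Fin 2 → ℂ) 0 * u1 R + (Pi.single j 1 : Fin 2 → ℂ) 1 * u2 R)
        (-((Pi.single j 1 : Fin 2 → ℂ) 0 * u1' R + (Pi.single j 1 : Fin 2 → ℂ) 1 * u2' R))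
  have hMδu := hInv δ0 δR hz'
  have hMθu := hInv θ0 θR hz
  have hΛδ : lambdaMat R V δ0 δR δ0' δR' z = Mm δ0' δR' * (Mm δ0 δR)⁻¹ := hlam _ _ _ _ hz'
  have hA : Smat (δ0' - θ0) (δR' - θR) + Smat (θ0 - δ0) (θR - δR) * lambdaMat R V δ0 δR δ0' δR' z
      = Smat (δ0' - δ0) (δR' - δR) * Mm θ0 θR * (Mm δ0 δR)⁻¹ := by
    rw [hΛδ, ← hkey θ0 θR, Matrix.add_mul, Matrix.mul_assoc, Matrix.mul_assoc,
      Matrix.mul_nonsing_inv _ hMδu, Matrix.mul_one]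
  have hA' : Smat (δ0' - θ0') (δR' - θR') + Smat (θ0' - δ0) (θR' - δR) * lambdaMat R V δ0 δR δ0' δR' z
      = Smat (δ0' - δ0) (δR' - δR) * Mm θ0' θR' * (Mm δ0 δR)⁻¹ := by
    rw [hΛδ, ← hkey θ0' θR', Matrix.add_mul, Matrix.mul_assoc, Matrix.mul_assoc,
      Matrix.mul_nonsing_inv _ hMδu, Matrix.mul_one]
  have hMδinvu : IsUnit (Mm δ0 δR)⁻¹ :=
    Matrix.isUnit_nonsing_inv_iff.2 ((Matrix.isUnit_iff_isUnit_det _).2 hMδu)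
  have hAu : IsUnit (Smat (δ0' - δ0) (δR' - δR) * Mm θ0 θR * (Mm δ0 δR)⁻¹) :=
    (((Matrix.isUnit_iff_isUnit_det _).2 hSdet).mul
      ((Matrix.isUnit_iff_isUnit_det _).2 hMθu)).mul hMδinvu
  refine ⟨by rw [hA]; exact hAu, ?_⟩
  rw [hlam θ0 θR θ0' θR' hz, hA, hA']
  rw [Matrix.mul_inv_rev, Matrix.mul_inv_rev, Matrix.nonsing_inv_nonsing_inv _ hMδu]
  simp only [Matrix.mul_assoc]
  rw [Matrix.nonsing_inv_mul_cancel_left _ _ hSdet, Matrix.nonsing_inv_mul _ hSdet,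
    Matrix.mul_one, Matrix.nonsing_inv_mul_cancel_left _ _ hMδu]
end

section
/- Let θ₀, θ_R, θ₀', θ_R', δ₀, δ_R, δ₀', δ_R' ∈ [0,2π) with θ₀' − θ₀ ≠ 0 mod π, θ_R' − θ_R ≠ 0 mod π, δ₀' − δ₀ ≠ 0 mod π, and δ_R' − δ_R ≠ 0 mod π. Define the 4×4 complex block matrix A(θ,δ) with 2×2 blocks A_{1,1} = (S_{θ₀'−θ₀, θ_R'−θ_R})⁻¹ S_{δ₀'−θ₀, δ_R'−θ_R}, A_{1,2} = (S_{θ₀'−θ₀, θ_R'−θ_R})⁻¹ (S_{δ₀'−δ₀, δ_R'−δ_R})⁻¹ S_{θ₀−δ₀, θ_R−δ_R}, A_{2,1} = S_{δ₀'−θ₀', δ_R'−θ_R'}, A_{2,2} = (S_{δ₀'−δ₀, δ_R'−δ_R})⁻¹ S_{θ₀'−δ₀, θ_R'−δ_R}. Then A(θ,δ)* J₄ A(θ,δ) = J₄, i.e., A(θ,δ) belongs to 𝒜₄. -/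
open MeasureTheory Set Complex Filter Matrix

noncomputable section

/-- The `4 × 4` block matrix `J₄ = [[0, −I₂], [I₂, 0]]`. -/
def J4 : Matrix (Fin 2 ⊕ Fin 2) (Fin 2 ⊕ Fin 2) ℂ :=
  Matrix.fromBlocks 0 (-1) 1 0

/-- The `4 × 4` block matrix `A(θ,δ)` of Lemma 4.4. -/
def blockA (θ0 θR θ0' θR' δ0 δR δ0' δR' : ℝ) :
    Matrix (Fin 2 ⊕ Fin 2) (Fin 2 ⊕ Fin 2) ℂ :=
  Matrix.fromBlocks
    ((Smat (↑(θ0' - θ0)) (↑(θR' - θR)))⁻¹ * Smat (↑(δ0' - θ0)) (↑(δR' - θR)))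
    ((Smat (↑(θ0' - θ0)) (↑(θR' - θR)))⁻¹ * (Smat (↑(δ0' - δ0)) (↑(δR' - δR)))⁻¹ *
      Smat (↑(θ0 - δ0)) (↑(θR - δR)))
    (Smat (↑(δ0' - θ0')) (↑(δR' - θR')))
    ((Smat (↑(δ0' - δ0)) (↑(δR' - δR)))⁻¹ * Smat (↑(θ0' - δ0)) (↑(θR' - δR)))

end

/-- Inverse of `Smat` when both sines are nonzero. -/
lemma Smat_inv (α β : ℂ) (hα : Complex.sin α ≠ 0) (hβ : Complex.sin β ≠ 0) :
    (Smat α β)⁻¹ = Matrix.diagonal ![(Complex.sin α)⁻¹, (Complex.sin β)⁻¹] := by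
  apply Matrix.inv_eq_right_inv
  rw [Smat, Matrix.diagonal_mul_diagonal]
  ext i j
  fin_cases i <;> fin_cases j <;>
    simp [Matrix.diagonal, Matrix.one_apply, mul_inv_cancel₀, hα, hβ]

/-- A block matrix with real diagonal blocks whose pointwise determinant is `1`
is in the symplectic group. -/
lemma main_lemma (p q r s : Fin 2 → ℝ)
    (h : ∀ i, p i * s i - q i * r i = 1) :
    (Matrix.fromBlocks (Matrix.diagonal fun i => (p i : ℂ))
        (Matrix.diagonal fun i => (q i : ℂ))
        (Matrix.diagonal fun i => (r i : ℂ))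
        (Matrix.diagonal fun i => (s i : ℂ)))ᴴ * J4 *
      (Matrix.fromBlocks (Matrix.diagonal fun i => (p i : ℂ))
        (Matrix.diagonal fun i => (q i : ℂ))
        (Matrix.diagonal fun i => (r i : ℂ))
        (Matrix.diagonal fun i => (s i : ℂ))) = J4 := by
  rw [J4, Matrix.fromBlocks_conjTranspose, Matrix.fromBlocks_multiply,
    Matrix.fromBlocks_multiply]
  simp only [Matrix.diagonal_conjTranspose, Matrix.mul_zero, zero_add,
    Matrix.mul_neg, Matrix.mul_one, add_zero, Matrix.zero_mul,
    Matrix.neg_mul, Matrix.one_mul, Matrix.diagonal_mul_diagonal]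
  have hC : ∀ i, (p i : ℂ) * s i - q i * r i = 1 := by
    intro i; exact_mod_cast congrArg (fun x : ℝ => (x : ℂ)) (h i)
  simp only [Pi.star_apply, Complex.star_def, Complex.conj_ofReal,
    ← sub_eq_add_neg, ← Matrix.diagonal_sub]
  rw [show (-1 : Matrix (Fin 2) (Fin 2) ℂ) = Matrix.diagonal (fun _ => -1) by
      simp [← Matrix.diagonal_one, Matrix.diagonal_neg],
    show (0 : Matrix (Fin 2) (Fin 2) ℂ) = Matrix.diagonal (fun _ => 0) by simp,
    show (1 : Matrix (Fin 2) (Fin 2) ℂ) = Matrix.diagonal (fun _ => 1) by simp]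
  rw [Matrix.fromBlocks_inj]
  refine ⟨?_, ?_, ?_, ?_⟩ <;> ext i j <;>
    (rcases eq_or_ne i j with rfl | hij
     · simp only [Matrix.sub_apply, Matrix.diagonal_apply_eq]
       first | linear_combination hC i | linear_combination -hC i | ring
     · simp [Matrix.sub_apply, Matrix.diagonal_apply_ne _ hij])

/-- For `θ₀, θ_R, θ₀', θ_R', δ₀, δ_R, δ₀', δ_R' ∈ [0,2π)` with
`θ₀' − θ₀ ≠ 0 mod π`, `θ_R' − θ_R ≠ 0 mod π`, `δ₀' − δ₀ ≠ 0 mod π`,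
`δ_R' − δ_R ≠ 0 mod π`, the block matrix `A(θ,δ)` satisfies
`A(θ,δ)* J₄ A(θ,δ) = J₄`, i.e. `A(θ,δ) ∈ 𝒜₄`. -/
theorem blockA_mem_A4
    (θ0 θR θ0' θR' δ0 δR δ0' δR' : ℝ)
    (h1 : θ0 ∈ Ico (0:ℝ) (2 * Real.pi)) (h2 : θR ∈ Ico (0:ℝ) (2 * Real.pi))
    (h3 : θ0' ∈ Ico (0:ℝ) (2 * Real.pi)) (h4 : θR' ∈ Ico (0:ℝ) (2 * Real.pi))
    (h5 : δ0 ∈ Ico (0:ℝ) (2 * Real.pi)) (h6 : δR ∈ Ico (0:ℝ) (2 * Real.pi))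
    (h7 : δ0' ∈ Ico (0:ℝ) (2 * Real.pi)) (h8 : δR' ∈ Ico (0:ℝ) (2 * Real.pi))
    (m1 : ∀ k : ℤ, θ0' - θ0 ≠ k * Real.pi) (m2 : ∀ k : ℤ, θR' - θR ≠ k * Real.pi)
    (m3 : ∀ k : ℤ, δ0' - δ0 ≠ k * Real.pi) (m4 : ∀ k : ℤ, δR' - δR ≠ k * Real.pi) :
    (blockA θ0 θR θ0' θR' δ0 δR δ0' δR')ᴴ * J4 * blockA θ0 θR θ0' θR' δ0 δR δ0' δR' =
      J4 := by
  have key : ∀ u : ℝ, (∀ k : ℤ, u ≠ k * Real.pi) → Real.sin u ≠ 0 := by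
    intro u hu
    rw [Real.sin_ne_zero_iff]
    exact fun n hn => hu n hn.symm
  set x : Fin 2 → ℝ := ![θ0, θR]
  set x' : Fin 2 → ℝ := ![θ0', θR']
  set y : Fin 2 → ℝ := ![δ0, δR]
  set y' : Fin 2 → ℝ := ![δ0', δR']
  have hθ : ∀ i, Real.sin (x' i - x i) ≠ 0 := by
    intro i; fin_cases i
    · exact key _ m1
    · exact key _ m2
  have hδ : ∀ i, Real.sin (y' i - y i) ≠ 0 := by
    intro i; fin_cases i
    · exact key _ m3
    · exact key _ m4
  set p : Fin 2 → ℝ := fun i => (Real.sin (x' i - x i))⁻¹ * Real.sin (y' i - x i)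
  set q : Fin 2 → ℝ := fun i =>
    (Real.sin (x' i - x i))⁻¹ * (Real.sin (y' i - y i))⁻¹ * Real.sin (x i - y i)
  set r : Fin 2 → ℝ := fun i => Real.sin (y' i - x' i)
  set s : Fin 2 → ℝ := fun i => (Real.sin (y' i - y i))⁻¹ * Real.sin (x' i - y i)
  have hdet : ∀ i, p i * s i - q i * r i = 1 := by
    intro i
    have key2 : Real.sin (y' i - x i) * Real.sin (x' i - y i) -
        Real.sin (x i - y i) * Real.sin (y' i - x' i)
        = Real.sin (x' i - x i) * Real.sin (y' i - y i) := by
      simp only [Real.sin_sub, Real.cos_sub]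
      ring
    have h1 := hθ i
    have h2 := hδ i
    rw [show p i * s i - q i * r i = (Real.sin (y' i - x i) * Real.sin (x' i - y i) -
        Real.sin (x i - y i) * Real.sin (y' i - x' i)) *
        ((Real.sin (x' i - x i))⁻¹ * (Real.sin (y' i - y i))⁻¹) by simp only [p, q, r, s]; ring,
      key2, ← mul_inv, mul_inv_cancel₀ (mul_ne_zero h1 h2)]
  have hblock : blockA θ0 θR θ0' θR' δ0 δR δ0' δR' =
      Matrix.fromBlocks (Matrix.diagonal fun i => (p i : ℂ))
        (Matrix.diagonal fun i => (q i : ℂ))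
        (Matrix.diagonal fun i => (r i : ℂ))
        (Matrix.diagonal fun i => (s i : ℂ)) := by
    have cθ : ∀ i, Complex.sin (↑(x' i - x i)) ≠ 0 := fun i => by
      rw [← Complex.ofReal_sin]; exact_mod_cast hθ i
    have cδ : ∀ i, Complex.sin (↑(y' i - y i)) ≠ 0 := fun i => by
      rw [← Complex.ofReal_sin]; exact_mod_cast hδ i
    have e1 : Complex.sin (↑(θ0' - θ0)) ≠ 0 := by simpa [x, x'] using cθ 0
    have e2 : Complex.sin (↑(θR' - θR)) ≠ 0 := by simpa [x, x'] using cθ 1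
    have e3 : Complex.sin (↑(δ0' - δ0)) ≠ 0 := by simpa [y, y'] using cδ 0
    have e4 : Complex.sin (↑(δR' - δR)) ≠ 0 := by simpa [y, y'] using cδ 1
    rw [blockA, Smat_inv _ _ e1 e2, Smat_inv _ _ e3 e4]
    simp only [Smat, Matrix.diagonal_mul_diagonal]
    rw [Matrix.fromBlocks_inj]
    refine ⟨?_, ?_, ?_, ?_⟩ <;> refine congrArg Matrix.diagonal (funext fun i => ?_) <;>
      fin_cases i <;> simp [p, q, r, s, x, x', y, y']
  rw [hblock]
  exact main_lemma p q r s hdet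
end

section
/- Let θ₀, θ_R, θ₀', θ_R' ∈ S_{2π} with θ₀' − θ₀ ≠ 0 mod π and θ_R' − θ_R ≠ 0 mod π, and let z ∈ ℂ \ (σ(H_{θ₀,θ_R}) ∪ σ(H_{θ₀',θ_R'})). Then (H_{θ₀',θ_R'} − zI)⁻¹ = (H_{θ₀,θ_R} − zI)⁻¹ + [γ_{conj(θ₀'),conj(θ_R')} ∘ ((H_{θ₀,θ_R})* − conj(z)I)⁻¹]* · (S_{θ₀'−θ₀, θ_R'−θ_R})⁻¹ · [γ_{θ₀,θ_R} ∘ (H_{θ₀',θ_R'} − zI)⁻¹], where [·]* denotes the adjoint of the bounded operator L²((0,R); dx) → ℂ² in brackets and (H_{θ₀,θ_R})* is the Hilbert-space adjoint of H_{θ₀,θ_R}. -/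
open MeasureTheory Set Complex Filter Matrix
open scoped Classical

section KreinAux

open MeasureTheory Set Complex Filter

lemma aux_mul_int {R : ℝ} {c u : ℝ → ℂ}
    (hc : IntegrableOn c (Ioc 0 R)) (hu : ContinuousOn u (Icc 0 R)) :
    IntegrableOn (fun t => c t * u t) (Ioc 0 R) := by
  obtain ⟨C, hC⟩ := isCompact_Icc.exists_bound_of_continuousOn hu
  refine Integrable.mono' (hc.norm.mul_const C) ?_ ?_
  · exact hc.aestronglyMeasurable.mul
      ((hu.aestronglyMeasurable measurableSet_Icc).mono_measure
        (Measure.restrict_mono Ioc_subset_Icc_self le_rfl))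
  · filter_upwards [ae_restrict_mem measurableSet_Ioc] with t ht
    calc ‖c t * u t‖ = ‖c t‖ * ‖u t‖ := norm_mul _ _
    _ ≤ ‖c t‖ * C :=
      mul_le_mul_of_nonneg_left (hC t (Ioc_subset_Icc_self ht)) (norm_nonneg _)

lemma aux_swap {R : ℝ} {c h : ℝ → ℂ}
    (hc : IntegrableOn c (Ioc 0 R)) (hh : IntegrableOn h (Ioc 0 R)) :
    ∫ t in Ioc (0:ℝ) R, (∫ s in Ioc (0:ℝ) t, c s) * h t
      = ∫ s in Ioc (0:ℝ) R, c s * ∫ t in Ioc s R, h t := by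
  set μ := volume.restrict (Ioc (0:ℝ) R) with hμ
  set F : ℝ → ℝ → ℂ := fun t s => Set.indicator {p : ℝ × ℝ | p.2 ≤ p.1}
    (fun p => c p.2 * h p.1) (t, s) with hF
  have hS : MeasurableSet {p : ℝ × ℝ | p.2 ≤ p.1} :=
    measurableSet_le measurable_snd measurable_fst
  have hFint : Integrable (Function.uncurry F) (μ.prod μ) := by
    have hmeas : AEStronglyMeasurable (fun p : ℝ × ℝ => c p.2 * h p.1) (μ.prod μ) :=
      (hc.aestronglyMeasurable.comp_snd).mul (hh.aestronglyMeasurable.comp_fst)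
    refine Integrable.mono' (hh.norm.mul_prod hc.norm) (hmeas.indicator hS) ?_
    refine Eventually.of_forall fun p => ?_
    by_cases hp : p ∈ {p : ℝ × ℝ | p.2 ≤ p.1}
    · simp only [Function.uncurry, hF, Set.indicator_of_mem hp]
      exact le_of_eq (by rw [norm_mul, mul_comm])
    · simp only [Function.uncurry, hF, Set.indicator_of_notMem hp]
      simp only [norm_zero]
      positivity
  have hswap := integral_integral_swap hFint
  have hL : ∫ t, ∫ s, F t s ∂μ ∂μ = ∫ t in Ioc (0:ℝ) R, (∫ s in Ioc (0:ℝ) t, c s) * h t := by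
    rw [hμ]
    refine setIntegral_congr_fun measurableSet_Ioc fun t ht => ?_
    have : ∀ s, F t s = (Iic t).indicator (fun s => c s * h t) s := by
      intro s
      by_cases hs : s ≤ t
      · simp [hF, Set.indicator_of_mem, hs, Set.mem_setOf_eq]
      · simp [hF, Set.indicator_of_notMem, hs, Set.mem_setOf_eq]
    simp only [this]
    rw [setIntegral_indicator measurableSet_Iic, Set.Ioc_inter_Iic,
      min_eq_right ht.2, ← integral_mul_const]
  have hR2 : ∫ s, ∫ t, F t s ∂μ ∂μ = ∫ s in Ioc (0:ℝ) R, c s * ∫ t in Ioc s R, h t := by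
    rw [hμ]
    refine setIntegral_congr_fun measurableSet_Ioc fun s hs => ?_
    have : ∀ t, F t s = (Ici s).indicator (fun t => c s * h t) t := by
      intro t
      by_cases hts : s ≤ t
      · simp [hF, Set.indicator_of_mem, hts, Set.mem_setOf_eq]
      · simp [hF, Set.indicator_of_notMem, hts, Set.mem_setOf_eq]
    simp only [this]
    rw [setIntegral_indicator measurableSet_Ici]
    have hseteq : Ioc (0:ℝ) R ∩ Ici s = Icc s R := by
      ext t
      constructor
      · rintro ⟨⟨_, h2⟩, h3⟩; exact ⟨h3, h2⟩
      · rintro ⟨h1, h2⟩; exact ⟨⟨lt_of_lt_of_le hs.1 h1, h2⟩, h1⟩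
    rw [hseteq, integral_Icc_eq_integral_Ioc, integral_const_mul]
  rw [← hL, ← hR2]; exact hswap

lemma aux_ibp {R : ℝ} (hR : 0 ≤ R) {φ φ' h : ℝ → ℂ} (ψ0 : ℂ)
    (hφ : ∀ x ∈ Icc (0:ℝ) R, HasDerivAt φ (φ' x) x)
    (hφ' : ContinuousOn φ' (Icc 0 R))
    (hh : IntegrableOn h (Ioc 0 R)) :
    ∫ t in Ioc (0:ℝ) R, φ t * h t
      = φ R * (ψ0 + ∫ t in Ioc (0:ℝ) R, h t) - φ 0 * ψ0
        - ∫ s in Ioc (0:ℝ) R, φ' s * (ψ0 + ∫ t in Ioc (0:ℝ) s, h t) := by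
  have hφ'Icc : IntegrableOn φ' (Icc 0 R) := hφ'.integrableOn_Icc
  have hφ'int : IntegrableOn φ' (Ioc 0 R) := hφ'Icc.mono_set Ioc_subset_Icc_self
  have hhIcc : IntegrableOn h (Icc 0 R) := by
    rwa [integrableOn_Icc_iff_integrableOn_Ioc]
  -- FTC for φ
  have hFTC : ∀ x ∈ Icc (0:ℝ) R, φ x = φ 0 + ∫ s in Ioc (0:ℝ) x, φ' s := by
    intro x hx
    have h1 : ∫ s in (0:ℝ)..x, φ' s = φ x - φ 0 := by
      apply intervalIntegral.integral_eq_sub_of_hasDerivAt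
      · intro t ht
        rw [uIcc_of_le hx.1] at ht
        exact hφ t ⟨ht.1, le_trans ht.2 hx.2⟩
      · rw [intervalIntegrable_iff_integrableOn_Ioc_of_le hx.1]
        exact hφ'int.mono_set (Ioc_subset_Ioc le_rfl hx.2)
    rw [intervalIntegral.integral_of_le hx.1] at h1
    linear_combination -h1
  -- primitive of h and of φ'
  set H : ℝ → ℂ := fun x => ∫ t in Ioc (0:ℝ) x, h t with hH
  have hHcont : ContinuousOn H (Icc 0 R) := intervalIntegral.continuousOn_primitive hhIcc
  have hHint : ∀ s ∈ Ioc (0:ℝ) R, (∫ t in Ioc s R, h t) = H R - H s := by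
    intro s hs
    have hunion : Ioc (0:ℝ) s ∪ Ioc s R = Ioc (0:ℝ) R := Ioc_union_Ioc_eq_Ioc hs.1.le hs.2
    have hdisj : Disjoint (Ioc (0:ℝ) s) (Ioc s R) := by
      apply Set.disjoint_left.2
      rintro t ⟨_, h2⟩ ⟨h3, _⟩
      exact absurd h3 (not_lt.2 h2)
    have := setIntegral_union hdisj measurableSet_Ioc
      (hh.mono_set (Ioc_subset_Ioc le_rfl hs.2)) (hh.mono_set (Ioc_subset_Ioc hs.1.le le_rfl))
    rw [hunion] at this
    rw [hH]
    simp only []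
    linear_combination -this
  -- step 1: replace φ by its FTC form in the LHS
  have step1 : ∫ t in Ioc (0:ℝ) R, φ t * h t
      = ∫ t in Ioc (0:ℝ) R, (φ 0 + ∫ s in Ioc (0:ℝ) t, φ' s) * h t := by
    refine setIntegral_congr_fun measurableSet_Ioc fun t ht => ?_
    rw [← hFTC t (Ioc_subset_Icc_self ht)]
  have hPcont : ContinuousOn (fun t => ∫ s in Ioc (0:ℝ) t, φ' s) (Icc 0 R) :=
    intervalIntegral.continuousOn_primitive hφ'Icc
  have hint1 : IntegrableOn (fun t => φ 0 * h t) (Ioc 0 R) := hh.const_mul _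
  have hint2 : IntegrableOn (fun t => (∫ s in Ioc (0:ℝ) t, φ' s) * h t) (Ioc 0 R) := by
    have := aux_mul_int hh hPcont
    simpa [mul_comm] using this
  have step2 : ∫ t in Ioc (0:ℝ) R, (φ 0 + ∫ s in Ioc (0:ℝ) t, φ' s) * h t
      = φ 0 * H R + ∫ t in Ioc (0:ℝ) R, (∫ s in Ioc (0:ℝ) t, φ' s) * h t := by
    have : ∀ t, (φ 0 + ∫ s in Ioc (0:ℝ) t, φ' s) * h t
        = φ 0 * h t + (∫ s in Ioc (0:ℝ) t, φ' s) * h t := fun t => by ring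
    simp only [this]
    rw [integral_add hint1 hint2, integral_const_mul]
  have step3 := aux_swap hφ'int hh
  -- rewrite RHS of swap
  have step4 : ∫ s in Ioc (0:ℝ) R, φ' s * ∫ t in Ioc s R, h t
      = ∫ s in Ioc (0:ℝ) R, φ' s * (H R - H s) := by
    refine setIntegral_congr_fun measurableSet_Ioc fun s hs => ?_
    rw [hHint s hs]
  have hφ'H : IntegrableOn (fun s => φ' s * H s) (Ioc 0 R) := aux_mul_int hφ'int hHcont
  have step5 : ∫ s in Ioc (0:ℝ) R, φ' s * (H R - H s)
      = (φ R - φ 0) * H R - ∫ s in Ioc (0:ℝ) R, φ' s * H s := by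
    have : ∀ s, φ' s * (H R - H s) = φ' s * H R - φ' s * H s := fun s => by ring
    simp only [this]
    rw [integral_sub (hφ'int.mul_const _) hφ'H, integral_mul_const]
    have hφR := hFTC R ⟨hR, le_refl R⟩
    have : ∫ s in Ioc (0:ℝ) R, φ' s = φ R - φ 0 := by linear_combination -hφR
    rw [this]
  -- expand the claimed RHS
  have step6 : ∫ s in Ioc (0:ℝ) R, φ' s * (ψ0 + ∫ t in Ioc (0:ℝ) s, h t)
      = (φ R - φ 0) * ψ0 + ∫ s in Ioc (0:ℝ) R, φ' s * H s := by
    have : ∀ s, φ' s * (ψ0 + H s) = φ' s * ψ0 + φ' s * H s := fun s => by ring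
    simp only [hH] at this ⊢
    simp only [this]
    rw [integral_add (hφ'int.mul_const _) hφ'H, integral_mul_const]
    have hφR := hFTC R ⟨hR, le_refl R⟩
    have h7 : ∫ s in Ioc (0:ℝ) R, φ' s = φ R - φ 0 := by linear_combination -hφR
    rw [h7]
  rw [step1, step2, step3, step4, step5, step6]
  have : H R = ∫ t in Ioc (0:ℝ) R, h t := rfl
  rw [← this]
  ring

lemma aux_lagrange {R : ℝ} (hR : 0 ≤ R) {a a' b b' p q : ℝ → ℂ}
    (ha : ∀ x ∈ Icc (0:ℝ) R, HasDerivAt a (a' x) x)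
    (hb : ∀ x ∈ Icc (0:ℝ) R, HasDerivAt b (b' x) x)
    (hp : IntegrableOn p (Ioc 0 R)) (hq : IntegrableOn q (Ioc 0 R))
    (ha' : ∀ x ∈ Icc (0:ℝ) R, a' x = a' 0 + ∫ t in Ioc (0:ℝ) x, q t)
    (hb' : ∀ x ∈ Icc (0:ℝ) R, b' x = b' 0 + ∫ t in Ioc (0:ℝ) x, p t) :
    ∫ t in Ioc (0:ℝ) R, (a t * p t - q t * b t)
      = (a R * b' R - a' R * b R) - (a 0 * b' 0 - a' 0 * b 0) := by
  have hpIcc : IntegrableOn p (Icc 0 R) := by rwa [integrableOn_Icc_iff_integrableOn_Ioc]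
  have hqIcc : IntegrableOn q (Icc 0 R) := by rwa [integrableOn_Icc_iff_integrableOn_Ioc]
  have hac : ContinuousOn a (Icc 0 R) := fun x hx => (ha x hx).continuousAt.continuousWithinAt
  have hbc : ContinuousOn b (Icc 0 R) := fun x hx => (hb x hx).continuousAt.continuousWithinAt
  have ha'c : ContinuousOn a' (Icc 0 R) := by
    refine ContinuousOn.congr (continuousOn_const.add
      (intervalIntegral.continuousOn_primitive hqIcc)) fun x hx => ha' x hx
  have hb'c : ContinuousOn b' (Icc 0 R) := by
    refine ContinuousOn.congr (continuousOn_const.add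
      (intervalIntegral.continuousOn_primitive hpIcc)) fun x hx => hb' x hx
  have hRmem : R ∈ Icc (0:ℝ) R := ⟨hR, le_refl R⟩
  have I1 := aux_ibp hR (b' 0) ha ha'c hp
  have I2 := aux_ibp hR (a' 0) hb hb'c hq
  -- replace ψ0 + primitive by b' resp. a'
  have e1 : ∫ s in Ioc (0:ℝ) R, a' s * (b' 0 + ∫ t in Ioc (0:ℝ) s, p t)
      = ∫ s in Ioc (0:ℝ) R, a' s * b' s :=
    setIntegral_congr_fun measurableSet_Ioc fun s hs => by
      rw [← hb' s (Ioc_subset_Icc_self hs)]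
  have e2 : ∫ s in Ioc (0:ℝ) R, b' s * (a' 0 + ∫ t in Ioc (0:ℝ) s, q t)
      = ∫ s in Ioc (0:ℝ) R, b' s * a' s :=
    setIntegral_congr_fun measurableSet_Ioc fun s hs => by
      rw [← ha' s (Ioc_subset_Icc_self hs)]
  have e3 : ∫ s in Ioc (0:ℝ) R, b' s * a' s = ∫ s in Ioc (0:ℝ) R, a' s * b' s :=
    setIntegral_congr_fun measurableSet_Ioc fun s _ => mul_comm _ _
  have e4 : b' R = b' 0 + ∫ t in Ioc (0:ℝ) R, p t := hb' R hRmem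
  have e5 : a' R = a' 0 + ∫ t in Ioc (0:ℝ) R, q t := ha' R hRmem
  have hap : IntegrableOn (fun t => a t * p t) (Ioc 0 R) := by
    simpa [mul_comm] using aux_mul_int hp hac
  have hqb : IntegrableOn (fun t => q t * b t) (Ioc 0 R) := aux_mul_int hq hbc
  have esplit : ∫ t in Ioc (0:ℝ) R, (a t * p t - q t * b t)
      = (∫ t in Ioc (0:ℝ) R, a t * p t) - ∫ t in Ioc (0:ℝ) R, q t * b t :=
    integral_sub hap hqb
  have e6 : ∫ t in Ioc (0:ℝ) R, q t * b t = ∫ t in Ioc (0:ℝ) R, b t * q t :=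
    setIntegral_congr_fun measurableSet_Ioc fun s _ => mul_comm _ _
  rw [esplit, e6, I1, I2, e1, e2, e3, ← e4, ← e5]
  ring

lemma aux_bd0 {A B A' B' x y x1 y1 x2 y2 : ℂ}
    (hpy : B ^ 2 + A ^ 2 = 1) (hpy' : B' ^ 2 + A' ^ 2 = 1)
    (h3 : A * x + B * y = 0) (h2 : A * x2 + B * y2 = 0) (h1 : A' * x1 + B' * y1 = 0)
    (hs : B' * A - A' * B ≠ 0) :
    -(x * (y1 - y2) - y * (x1 - x2))
      = (A' * x + B' * y) * ((A * x1 + B * y1) / (B' * A - A' * B)) := by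
  obtain ⟨l, hx, hy⟩ : ∃ l, x = l * B ∧ y = -(l * A) :=
    ⟨B * x - A * y, by linear_combination A * h3 - x * hpy, by linear_combination B * h3 - y * hpy⟩
  obtain ⟨m, hx2, hy2⟩ : ∃ m, x2 = m * B ∧ y2 = -(m * A) :=
    ⟨B * x2 - A * y2, by linear_combination A * h2 - x2 * hpy,
      by linear_combination B * h2 - y2 * hpy⟩
  obtain ⟨n, hx1, hy1⟩ : ∃ n, x1 = n * B' ∧ y1 = -(n * A') :=
    ⟨B' * x1 - A' * y1, by linear_combination A' * h1 - x1 * hpy',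
      by linear_combination B' * h1 - y1 * hpy'⟩
  subst hx hy hx2 hy2 hx1 hy1
  rw [mul_div_assoc', eq_div_iff hs]
  ring

lemma aux_bdR {C D C' D' x y x1 y1 x2 y2 : ℂ}
    (hpy : D ^ 2 + C ^ 2 = 1) (hpy' : D' ^ 2 + C' ^ 2 = 1)
    (h3 : C * x - D * y = 0) (h2 : C * x2 - D * y2 = 0) (h1 : C' * x1 - D' * y1 = 0)
    (hs : D' * C - C' * D ≠ 0) :
    x * (y1 - y2) - y * (x1 - x2)
      = (C' * x - D' * y) * ((C * x1 - D * y1) / (D' * C - C' * D)) := by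
  obtain ⟨l, hx, hy⟩ : ∃ l, x = l * D ∧ y = l * C :=
    ⟨D * x + C * y, by linear_combination C * h3 - x * hpy,
      by linear_combination -D * h3 - y * hpy⟩
  obtain ⟨m, hx2, hy2⟩ : ∃ m, x2 = m * D ∧ y2 = m * C :=
    ⟨D * x2 + C * y2, by linear_combination C * h2 - x2 * hpy,
      by linear_combination -D * h2 - y2 * hpy⟩
  obtain ⟨n, hx1, hy1⟩ : ∃ n, x1 = n * D' ∧ y1 = n * C' :=
    ⟨D' * x1 + C' * y1, by linear_combination C' * h1 - x1 * hpy',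
      by linear_combination -D' * h1 - y1 * hpy'⟩
  subst hx hy hx2 hy2 hx1 hy1
  rw [mul_div_assoc', eq_div_iff hs]
  ring

end KreinAux

/-- The resolvent identity
`(H_{θ₀',θ_R'} − z)⁻¹ = (H_{θ₀,θ_R} − z)⁻¹
  + [γ_{conj θ₀',conj θ_R'} ((H_{θ₀,θ_R})* − conj z)⁻¹]* S_{θ₀'−θ₀,θ_R'−θ_R}⁻¹
    [γ_{θ₀,θ_R} (H_{θ₀',θ_R'} − z)⁻¹]`,
stated in the equivalent scalar form obtained by pairing with arbitrary
`f, g ∈ L²((0,R))` (inner products linear in the second argument):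
`⟨f, (H_{θ₀',θ_R'} − z)⁻¹ g⟩_{L²} = ⟨f, (H_{θ₀,θ_R} − z)⁻¹ g⟩_{L²}
  + ⟨γ_{conj θ₀',conj θ_R'} ((H_{θ₀,θ_R})* − conj z)⁻¹ f,
      S_{θ₀'−θ₀,θ_R'−θ_R}⁻¹ γ_{θ₀,θ_R} (H_{θ₀',θ_R'} − z)⁻¹ g⟩_{ℂ²}`.
Resolvents are encoded by their defining boundary value problems: `u₁`, `u₂`, `w`
are respectively `(H_{θ₀',θ_R'} − z)⁻¹ g`, `(H_{θ₀,θ_R} − z)⁻¹ g` and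
`((H_{θ₀,θ_R})* − conj z)⁻¹ f`, the adjoint `(H_{θ₀,θ_R})*` acting as
`w ↦ −w'' + conj V w` with boundary condition `γ_{conj θ₀,conj θ_R}(w) = 0`. -/
theorem krein_resolvent_identity_first_form
    (R : ℝ) (hR : 0 < R) (V : ℝ → ℂ) (hV : IntegrableOn V (Ioo 0 R))
    (θ0 θR θ0' θR' : ℂ)
    (hθ0 : θ0 ∈ S2pi) (hθR : θR ∈ S2pi) (hθ0' : θ0' ∈ S2pi) (hθR' : θR' ∈ S2pi)
    (hm0 : NeZeroModPi (θ0' - θ0)) (hmR : NeZeroModPi (θR' - θR))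
    (z : ℂ) (hz : ¬ IsEigenvalue R V θ0 θR z) (hz' : ¬ IsEigenvalue R V θ0' θR' z)
    (f g : ℝ → ℂ)
    (hf : MemLp f 2 (volume.restrict (Ioo (0:ℝ) R)))
    (hg : MemLp g 2 (volume.restrict (Ioo (0:ℝ) R)))
    (u1 u1' u2 u2' w w' : ℝ → ℂ)
    (hu1 : IsSolInhom R V z g u1 u1') (hu1bc : bTrace R θ0' θR' u1 u1' = 0)
    (hu2 : IsSolInhom R V z g u2 u2') (hu2bc : bTrace R θ0 θR u2 u2' = 0)
    (hw : IsSolInhom R (fun x => (starRingEnd ℂ) (V x)) ((starRingEnd ℂ) z) f w w')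
    (hwbc : bTrace R ((starRingEnd ℂ) θ0) ((starRingEnd ℂ) θR) w w' = 0) :
    ∫ x in Ioo (0:ℝ) R, (starRingEnd ℂ) (f x) * u1 x =
      (∫ x in Ioo (0:ℝ) R, (starRingEnd ℂ) (f x) * u2 x) +
        ((starRingEnd ℂ)
            (bTrace R ((starRingEnd ℂ) θ0') ((starRingEnd ℂ) θR') w w' 0) *
          (bTrace R θ0 θR u1 u1' 0 / Complex.sin (θ0' - θ0)) +
        (starRingEnd ℂ)
            (bTrace R ((starRingEnd ℂ) θ0') ((starRingEnd ℂ) θR') w w' 1) *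
          (bTrace R θ0 θR u1 u1' 1 / Complex.sin (θR' - θR))) := by
  have hres : volume.restrict (Ioo (0:ℝ) R) = volume.restrict (Ioc (0:ℝ) R) :=
    Measure.restrict_congr_set Ioo_ae_eq_Ioc
  haveI : IsFiniteMeasure (volume.restrict (Ioc (0:ℝ) R)) :=
    ⟨by rw [Measure.restrict_apply_univ]; exact measure_Ioc_lt_top⟩
  have hV' : IntegrableOn V (Ioc 0 R) := by
    rw [IntegrableOn, ← hres]; exact hV
  have hfint : IntegrableOn f (Ioc 0 R) := by
    have h2 : MemLp f 2 (volume.restrict (Ioc (0:ℝ) R)) := hres ▸ hf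
    exact h2.integrable one_le_two
  have hgint : IntegrableOn g (Ioc 0 R) := by
    have h2 : MemLp g 2 (volume.restrict (Ioc (0:ℝ) R)) := hres ▸ hg
    exact h2.integrable one_le_two
  have hfconj : IntegrableOn (fun t => (starRingEnd ℂ) (f t)) (Ioc 0 R) :=
    hfint.norm.mono'
      (Complex.continuous_conj.comp_aestronglyMeasurable hfint.aestronglyMeasurable)
      (Eventually.of_forall fun t => by simp)
  -- continuity of solutions
  have hu1c : ContinuousOn u1 (Icc 0 R) :=
    fun x hx => (hu1.1 x hx).continuousAt.continuousWithinAt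
  have hu2c : ContinuousOn u2 (Icc 0 R) :=
    fun x hx => (hu2.1 x hx).continuousAt.continuousWithinAt
  -- conjugated solution W = conj w
  have hWd : ∀ x ∈ Icc (0:ℝ) R, HasDerivAt (fun t => (starRingEnd ℂ) (w t))
      ((starRingEnd ℂ) (w' x)) x := fun x hx => (hw.1 x hx).star
  have hWc : ContinuousOn (fun t => (starRingEnd ℂ) (w t)) (Icc 0 R) :=
    fun x hx => (hWd x hx).continuousAt.continuousWithinAt
  have hVz : IntegrableOn (fun t => V t - z) (Ioc 0 R) :=
    hV'.sub (integrableOn_const measure_Ioc_lt_top.ne)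
  -- integrable data
  have hp : IntegrableOn (fun t => (V t - z) * (u1 t - u2 t)) (Ioc 0 R) :=
    aux_mul_int hVz (hu1c.sub hu2c)
  have hq : IntegrableOn
      (fun t => (V t - z) * (starRingEnd ℂ) (w t) - (starRingEnd ℂ) (f t)) (Ioc 0 R) :=
    (aux_mul_int hVz hWc).sub hfconj
  have hF1 : IntegrableOn (fun t => (V t - z) * u1 t - g t) (Ioc 0 R) :=
    (aux_mul_int hVz hu1c).sub hgint
  have hF2 : IntegrableOn (fun t => (V t - z) * u2 t - g t) (Ioc 0 R) :=
    (aux_mul_int hVz hu2c).sub hgint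
  -- derivative representations in Ioc form
  have hu1rep : ∀ x ∈ Icc (0:ℝ) R, u1' x = u1' 0 + ∫ t in Ioc (0:ℝ) x, ((V t - z) * u1 t - g t) :=
    fun x hx => by rw [hu1.2 x hx, intervalIntegral.integral_of_le hx.1]
  have hu2rep : ∀ x ∈ Icc (0:ℝ) R, u2' x = u2' 0 + ∫ t in Ioc (0:ℝ) x, ((V t - z) * u2 t - g t) :=
    fun x hx => by rw [hu2.2 x hx, intervalIntegral.integral_of_le hx.1]
  have hurep : ∀ x ∈ Icc (0:ℝ) R, u1' x - u2' x = (u1' 0 - u2' 0)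
      + ∫ t in Ioc (0:ℝ) x, ((V t - z) * (u1 t - u2 t)) := by
    intro x hx
    have hA := hu1rep x hx
    have hB := hu2rep x hx
    have hsub : ∫ t in Ioc (0:ℝ) x, ((V t - z) * (u1 t - u2 t))
        = (∫ t in Ioc (0:ℝ) x, ((V t - z) * u1 t - g t))
          - ∫ t in Ioc (0:ℝ) x, ((V t - z) * u2 t - g t) := by
      rw [← integral_sub (hF1.mono_set (Ioc_subset_Ioc le_rfl hx.2))
        (hF2.mono_set (Ioc_subset_Ioc le_rfl hx.2))]
      exact setIntegral_congr_fun measurableSet_Ioc fun t _ => by ring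
    rw [hsub]
    linear_combination hA - hB
  have hWrep : ∀ x ∈ Icc (0:ℝ) R, (starRingEnd ℂ) (w' x) = (starRingEnd ℂ) (w' 0)
      + ∫ t in Ioc (0:ℝ) x, ((V t - z) * (starRingEnd ℂ) (w t) - (starRingEnd ℂ) (f t)) := by
    intro x hx
    have h0 := hw.2 x hx
    rw [intervalIntegral.integral_of_le hx.1] at h0
    have h1 := congrArg (starRingEnd ℂ) h0
    rw [map_add, ← integral_conj] at h1
    simpa [_root_.map_sub, _root_.map_mul, Complex.conj_conj] using h1
  -- Lagrange identity
  have hLag := aux_lagrange hR.le hWd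
    (fun x hx => (hu1.1 x hx).sub (hu2.1 x hx)) hp hq hWrep hurep
  -- pointwise identity and splitting
  have hpoint : ∫ t in Ioc (0:ℝ) R,
      ((starRingEnd ℂ) (w t) * ((V t - z) * (u1 t - u2 t))
        - ((V t - z) * (starRingEnd ℂ) (w t) - (starRingEnd ℂ) (f t)) * (u1 t - u2 t))
      = ∫ t in Ioc (0:ℝ) R, (starRingEnd ℂ) (f t) * (u1 t - u2 t) :=
    setIntegral_congr_fun measurableSet_Ioc fun t _ => by ring
  have hsplit : ∫ t in Ioc (0:ℝ) R, (starRingEnd ℂ) (f t) * (u1 t - u2 t)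
      = (∫ t in Ioc (0:ℝ) R, (starRingEnd ℂ) (f t) * u1 t)
        - ∫ t in Ioc (0:ℝ) R, (starRingEnd ℂ) (f t) * u2 t := by
    rw [← integral_sub (aux_mul_int hfconj hu1c) (aux_mul_int hfconj hu2c)]
    exact setIntegral_congr_fun measurableSet_Ioc fun t _ => by ring
  have key : (∫ t in Ioc (0:ℝ) R, (starRingEnd ℂ) (f t) * u1 t)
      - (∫ t in Ioc (0:ℝ) R, (starRingEnd ℂ) (f t) * u2 t)
      = ((starRingEnd ℂ) (w R) * (u1' R - u2' R) - (starRingEnd ℂ) (w' R) * (u1 R - u2 R))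
        - ((starRingEnd ℂ) (w 0) * (u1' 0 - u2' 0)
            - (starRingEnd ℂ) (w' 0) * (u1 0 - u2 0)) := by
    rw [← hsplit, ← hpoint]
    exact hLag
  -- boundary conditions, scalar form
  have hb1_0 : Complex.cos θ0' * u1 0 + Complex.sin θ0' * u1' 0 = 0 := by
    have h1 := congrFun hu1bc 0; simpa [bTrace] using h1
  have hb1_R : Complex.cos θR' * u1 R - Complex.sin θR' * u1' R = 0 := by
    have h1 := congrFun hu1bc 1; simpa [bTrace] using h1
  have hb2_0 : Complex.cos θ0 * u2 0 + Complex.sin θ0 * u2' 0 = 0 := by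
    have h1 := congrFun hu2bc 0; simpa [bTrace] using h1
  have hb2_R : Complex.cos θR * u2 R - Complex.sin θR * u2' R = 0 := by
    have h1 := congrFun hu2bc 1; simpa [bTrace] using h1
  have hb3_0 : Complex.cos θ0 * (starRingEnd ℂ) (w 0)
      + Complex.sin θ0 * (starRingEnd ℂ) (w' 0) = 0 := by
    have h1 : Complex.cos ((starRingEnd ℂ) θ0) * w 0
        + Complex.sin ((starRingEnd ℂ) θ0) * w' 0 = 0 := by
      have h2 := congrFun hwbc 0; simpa [bTrace] using h2
    have h3 := congrArg (starRingEnd ℂ) h1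
    simpa [_root_.map_add, _root_.map_mul, Complex.cos_conj, Complex.sin_conj, Complex.conj_conj] using h3
  have hb3_R : Complex.cos θR * (starRingEnd ℂ) (w R)
      - Complex.sin θR * (starRingEnd ℂ) (w' R) = 0 := by
    have h1 : Complex.cos ((starRingEnd ℂ) θR) * w R
        - Complex.sin ((starRingEnd ℂ) θR) * w' R = 0 := by
      have h2 := congrFun hwbc 1; simpa [bTrace] using h2
    have h3 := congrArg (starRingEnd ℂ) h1
    simpa [_root_.map_sub, _root_.map_mul, Complex.cos_conj, Complex.sin_conj, Complex.conj_conj] using h3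
  -- nonvanishing of the sines
  have hs0 : Complex.sin θ0' * Complex.cos θ0 - Complex.cos θ0' * Complex.sin θ0 ≠ 0 := by
    rw [← Complex.sin_sub]
    intro hcon
    obtain ⟨k, hk⟩ := Complex.sin_eq_zero_iff.1 hcon
    exact hm0 k hk
  have hsR : Complex.sin θR' * Complex.cos θR - Complex.cos θR' * Complex.sin θR ≠ 0 := by
    rw [← Complex.sin_sub]
    intro hcon
    obtain ⟨k, hk⟩ := Complex.sin_eq_zero_iff.1 hcon
    exact hmR k hk
  have E0 := aux_bd0 (Complex.sin_sq_add_cos_sq θ0) (Complex.sin_sq_add_cos_sq θ0')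
    hb3_0 hb2_0 hb1_0 hs0
  have ER := aux_bdR (Complex.sin_sq_add_cos_sq θR) (Complex.sin_sq_add_cos_sq θR')
    hb3_R hb2_R hb1_R hsR
  -- unfold the traces in the goal
  have hT0 : (starRingEnd ℂ) (bTrace R ((starRingEnd ℂ) θ0') ((starRingEnd ℂ) θR') w w' 0)
      = Complex.cos θ0' * (starRingEnd ℂ) (w 0) + Complex.sin θ0' * (starRingEnd ℂ) (w' 0) := by
    simp [bTrace, _root_.map_add, _root_.map_mul, Complex.cos_conj, Complex.sin_conj, Complex.conj_conj]
  have hT1 : (starRingEnd ℂ) (bTrace R ((starRingEnd ℂ) θ0') ((starRingEnd ℂ) θR') w w' 1)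
      = Complex.cos θR' * (starRingEnd ℂ) (w R) - Complex.sin θR' * (starRingEnd ℂ) (w' R) := by
    simp [bTrace, _root_.map_sub, _root_.map_mul, Complex.cos_conj, Complex.sin_conj, Complex.conj_conj]
  have hU0 : bTrace R θ0 θR u1 u1' 0 = Complex.cos θ0 * u1 0 + Complex.sin θ0 * u1' 0 := by
    simp [bTrace]
  have hU1 : bTrace R θ0 θR u1 u1' 1 = Complex.cos θR * u1 R - Complex.sin θR * u1' R := by
    simp [bTrace]
  simp only [← integral_Ioc_eq_integral_Ioo]
  rw [hT0, hT1, hU0, hU1, Complex.sin_sub, Complex.sin_sub]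
  linear_combination key + E0 + ER
end
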